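/- Let K̃ be a positive integer, δ ∈ (0,1), and let S be a finite set of at most K̃ values. Let τ' = ⌈4·log₂(K̃/δ)⌉ and let h_1, …, h_{τ'} be random functions from the values to the bins {0,…,8K̃−1} such that the τ' functions are mutually independent and each h_a is pairwise independent with uniformly distributed values. For k ∈ S let C_k be the event that k collides with another element of S (i.e., ∃ j ∈ S, j ≠ k, h_a(j) = h_a(k)) in at least τ'/2 of the τ' arrays. Then for each k ∈ S, Pr[C_k] ≤ (δ/K̃)², and hence the probability that some element of S collides in at least half of the arrays is at most δ²/K̃. -/

import Mathlib

open MeasureTheory ProbabilityTheory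
open scoped ENNReal Classical

/-- **False negatives in Non-strict FRS.**
With `τ' = ⌈4·log₂(K̃/δ)⌉` arrays of `8K̃` bins and mutually independent
pairwise-independent uniform hash functions, for each `k ∈ S` the probability
that `k` collides with another element of `S` in at least `τ'/2` of the arrays
is at most `(δ/K̃)²`; hence the probability that some element of `S` collides in
at least half of the arrays is at most `δ²/K̃`. -/
theorem frs_nonstrict_false_negative_bound
    {Ω : Type*} [MeasurableSpace Ω] (μ : Measure Ω) [IsProbabilityMeasure μ]
    {ι : Type*} (Ktil : ℕ) (hK : 0 < Ktil) (δ : ℝ) (hδ : δ ∈ Set.Ioo (0 : ℝ) 1)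
    (S : Finset ι) (hS : S.card ≤ Ktil)
    (τ' : ℕ) (hτ : τ' = ⌈4 * Real.logb 2 ((Ktil : ℝ) / δ)⌉₊)
    (h : Fin τ' → ι → Ω → ℕ)
    (hmeas : ∀ a x, Measurable (h a x))
    (hrange : ∀ a x ω, h a x ω < 8 * Ktil)
    -- the τ' random functions (restricted to S) are mutually independent
    (hindep : iIndepFun
      (fun (a : Fin τ') (ω : Ω) => (fun x : S => h a x ω)) μ)
    -- each function is uniform on the bins
    (hunif : ∀ a x, ∀ v < 8 * Ktil,
      μ {ω | h a x ω = v} = (((8 * Ktil : ℕ) : ℝ≥0∞))⁻¹)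
    -- and pairwise independent
    (hpair : ∀ (a : Fin τ') (x y : ι), x ≠ y → ∀ v w, v < 8 * Ktil → w < 8 * Ktil →
      μ {ω | h a x ω = v ∧ h a y ω = w} =
        (((8 * Ktil : ℕ) : ℝ≥0∞))⁻¹ * (((8 * Ktil : ℕ) : ℝ≥0∞))⁻¹) :
    (∀ k ∈ S,
      μ {ω | ((τ' : ℝ) / 2) ≤
          ((Finset.univ.filter fun a : Fin τ' =>
            ∃ j ∈ S, j ≠ k ∧ h a j ω = h a k ω).card : ℝ)} ≤
        ENNReal.ofReal ((δ / Ktil) ^ 2)) ∧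
    μ {ω | ∃ k ∈ S, ((τ' : ℝ) / 2) ≤
        ((Finset.univ.filter fun a : Fin τ' =>
          ∃ j ∈ S, j ≠ k ∧ h a j ω = h a k ω).card : ℝ)} ≤
      ENNReal.ofReal (δ ^ 2 / Ktil) := by
  obtain ⟨hδ0, hδ1⟩ := hδ
  have hKpos : (0 : ℝ) < Ktil := by exact_mod_cast hK
  have hK1 : (1 : ℝ) ≤ Ktil := by exact_mod_cast hK
  have hKδ : 1 < (Ktil : ℝ) / δ := by
    rw [lt_div_iff₀ hδ0]; nlinarith
  have hL : 0 < Real.logb 2 ((Ktil : ℝ) / δ) := Real.logb_pos one_lt_two hKδ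
  have hτ4 : 4 * Real.logb 2 ((Ktil : ℝ) / δ) ≤ (τ' : ℝ) := by
    rw [hτ]; exact Nat.le_ceil _
  have hτpos : 0 < τ' := by
    rw [hτ]; exact Nat.ceil_pos.mpr (by linarith)
  have hN0 : ((8 * Ktil : ℕ) : ℝ≥0∞) ≠ 0 := by
    exact Nat.cast_ne_zero.mpr (by omega)
  have hNtop : ((8 * Ktil : ℕ) : ℝ≥0∞) ≠ ⊤ := ENNReal.natCast_ne_top _
  -- Step A: probability of a single collision
  have pairEq : ∀ (a : Fin τ') (j k : ι), j ≠ k →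
      μ {ω | h a j ω = h a k ω} = (((8 * Ktil : ℕ) : ℝ≥0∞))⁻¹ := by
    intro a j k hjk
    have hset : {ω | h a j ω = h a k ω}
        = ⋃ v ∈ Finset.range (8 * Ktil), {ω | h a j ω = v ∧ h a k ω = v} := by
      ext ω
      simp only [Set.mem_setOf_eq, Set.mem_iUnion, Finset.mem_range]
      constructor
      · intro he; exact ⟨h a k ω, hrange a k ω, he, rfl⟩
      · rintro ⟨v, _, h1, h2⟩; rw [h1, h2]
    have hdisj : Set.PairwiseDisjoint (↑(Finset.range (8 * Ktil)))
        (fun v => {ω | h a j ω = v ∧ h a k ω = v}) := by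
      intro v _ w _ hvw
      refine Set.disjoint_left.mpr ?_
      rintro ω ⟨h1, -⟩ ⟨h2, -⟩
      exact hvw (h1 ▸ h2 ▸ rfl)
    have hmeas' : ∀ v ∈ Finset.range (8 * Ktil),
        MeasurableSet {ω | h a j ω = v ∧ h a k ω = v} := by
      intro v _
      exact ((hmeas a j) (measurableSet_singleton v)).inter
        ((hmeas a k) (measurableSet_singleton v))
    rw [hset, measure_biUnion_finset hdisj hmeas']
    have hval : ∀ v ∈ Finset.range (8 * Ktil), μ {ω | h a j ω = v ∧ h a k ω = v}
        = (((8 * Ktil : ℕ) : ℝ≥0∞))⁻¹ * (((8 * Ktil : ℕ) : ℝ≥0∞))⁻¹ := fun v hv =>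
      hpair a j k hjk v v (Finset.mem_range.mp hv) (Finset.mem_range.mp hv)
    rw [Finset.sum_congr rfl hval, Finset.sum_const, Finset.card_range, nsmul_eq_mul,
      ← mul_assoc, ENNReal.mul_inv_cancel hN0 hNtop, one_mul]
  -- Step B: probability that `k` collides in a fixed array
  have Ebound : ∀ k ∈ S, ∀ a : Fin τ',
      μ {ω | ∃ j ∈ S, j ≠ k ∧ h a j ω = h a k ω} ≤ (8 : ℝ≥0∞)⁻¹ := by
    intro k hk a
    have hsub : {ω | ∃ j ∈ S, j ≠ k ∧ h a j ω = h a k ω}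
        = ⋃ j ∈ S.filter (· ≠ k), {ω | h a j ω = h a k ω} := by
      ext ω
      simp only [Set.mem_setOf_eq, Set.mem_iUnion, Finset.mem_filter]
      tauto
    rw [hsub]
    calc μ (⋃ j ∈ S.filter (· ≠ k), {ω | h a j ω = h a k ω})
        ≤ ∑ j ∈ S.filter (· ≠ k), μ {ω | h a j ω = h a k ω} :=
          measure_biUnion_finset_le _ _
      _ = ((S.filter (· ≠ k)).card : ℝ≥0∞) * (((8 * Ktil : ℕ) : ℝ≥0∞))⁻¹ := by
          rw [Finset.sum_congr rfl fun j hj => pairEq a j k (Finset.mem_filter.mp hj).2,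
            Finset.sum_const, nsmul_eq_mul]
      _ ≤ ((Ktil : ℕ) : ℝ≥0∞) * (((8 * Ktil : ℕ) : ℝ≥0∞))⁻¹ := by
          gcongr
          exact_mod_cast le_trans (Finset.card_filter_le _ _) hS
      _ = (8 : ℝ≥0∞)⁻¹ := by
          have hcast : ((8 * Ktil : ℕ) : ℝ≥0∞) = 8 * ((Ktil : ℕ) : ℝ≥0∞) := by
            push_cast; ring
          rw [hcast, ENNReal.mul_inv (Or.inl (by norm_num)) (Or.inl (by norm_num)),
            mul_left_comm, ENNReal.mul_inv_cancel
              (by exact_mod_cast hK.ne') (ENNReal.natCast_ne_top _), mul_one]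
  -- Step C: main bound for each `k`
  have key : ∀ k ∈ S,
      μ {ω | ((τ' : ℝ) / 2) ≤
          ((Finset.univ.filter fun a : Fin τ' =>
            ∃ j ∈ S, j ≠ k ∧ h a j ω = h a k ω).card : ℝ)} ≤
        ENNReal.ofReal ((δ / Ktil) ^ 2) := by
    intro k hk
    set E : Fin τ' → Set Ω := fun a => {ω | ∃ j ∈ S, j ≠ k ∧ h a j ω = h a k ω} with hE
    set m := ⌈(τ' : ℝ) / 2⌉₊ with hm
    have hmτ : (τ' : ℝ) / 2 ≤ (m : ℝ) := Nat.le_ceil _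
    -- independence of the collision events across arrays
    have hinter : ∀ T : Finset (Fin τ'), μ (⋂ a ∈ T, E a) = ∏ a ∈ T, μ (E a) := by
      intro T
      have hBmeas : MeasurableSet {f : S → ℕ | ∃ j : S, (j : ι) ≠ k ∧ f j = f ⟨k, hk⟩} := by
        have hBeq : {f : S → ℕ | ∃ j : S, (j : ι) ≠ k ∧ f j = f ⟨k, hk⟩}
            = ⋃ j : S, ⋃ (_ : (j : ι) ≠ k), {f : S → ℕ | f j = f ⟨k, hk⟩} := by
          ext f; simp
        rw [hBeq]
        exact MeasurableSet.iUnion fun j => MeasurableSet.iUnion fun _ =>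
          measurableSet_eq_fun (measurable_pi_apply j) (measurable_pi_apply _)
      have hEeq : ∀ a : Fin τ', E a = (fun ω => (fun x : S => h a x ω)) ⁻¹'
          {f : S → ℕ | ∃ j : S, (j : ι) ≠ k ∧ f j = f ⟨k, hk⟩} := by
        intro a
        ext ω
        simp only [hE, Set.mem_setOf_eq, Set.mem_preimage]
        constructor
        · rintro ⟨j, hjS, hjk, hh⟩; exact ⟨⟨j, hjS⟩, hjk, hh⟩
        · rintro ⟨⟨j, hjS⟩, hjk, hh⟩; exact ⟨j, hjS, hjk, hh⟩
      exact hindep.meas_biInter fun a _ =>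
        MeasurableSpace.measurableSet_comap.mpr ⟨_, hBmeas, (hEeq a).symm⟩
    -- union bound over sets of m arrays
    have hev : {ω | ((τ' : ℝ) / 2) ≤
          ((Finset.univ.filter fun a : Fin τ' =>
            ∃ j ∈ S, j ≠ k ∧ h a j ω = h a k ω).card : ℝ)}
        ⊆ ⋃ T ∈ Finset.powersetCard m (Finset.univ : Finset (Fin τ')), ⋂ a ∈ T, E a := by
      intro ω hω
      have hcard : m ≤ (Finset.univ.filter fun a : Fin τ' =>
          ∃ j ∈ S, j ≠ k ∧ h a j ω = h a k ω).card := by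
        rw [hm]; exact Nat.ceil_le.mpr hω
      obtain ⟨T, hTsub, hTcard⟩ := Finset.exists_subset_card_eq hcard
      refine Set.mem_iUnion₂.mpr ⟨T, Finset.mem_powersetCard.mpr
        ⟨Finset.subset_univ T, hTcard⟩, ?_⟩
      exact Set.mem_iInter₂.mpr fun a haT => (Finset.mem_filter.mp (hTsub haT)).2
    -- the real-number inequality
    have hmτ' : m ≤ τ' := by
      rw [hm]
      refine Nat.ceil_le.mpr ?_
      have : (0 : ℝ) ≤ τ' := Nat.cast_nonneg _
      linarith
    have hchoose : ((τ'.choose m : ℕ) : ℝ) ≤ (2 : ℝ) ^ (τ' : ℝ) := by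
      have h1 : τ'.choose m ≤ 2 ^ τ' := by
        calc τ'.choose m ≤ ∑ i ∈ Finset.range (τ' + 1), τ'.choose i :=
              Finset.single_le_sum (fun i _ => Nat.zero_le _)
                (Finset.mem_range.mpr (by omega))
          _ = 2 ^ τ' := Nat.sum_range_choose τ'
      calc ((τ'.choose m : ℕ) : ℝ) ≤ ((2 ^ τ' : ℕ) : ℝ) := by exact_mod_cast h1
        _ = (2 : ℝ) ^ (τ' : ℝ) := by push_cast; rw [Real.rpow_natCast]
    have h8 : ((8 : ℝ)⁻¹) = (2 : ℝ) ^ (-(3 : ℝ)) := by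
      rw [show (-(3 : ℝ)) = ((-3 : ℤ) : ℝ) by norm_num, Real.rpow_intCast]
      norm_num
    have step1 : ((8 : ℝ)⁻¹) ^ m ≤ (2 : ℝ) ^ (-(3 : ℝ) * ((τ' : ℝ) / 2)) := by
      calc ((8 : ℝ)⁻¹) ^ m = ((2 : ℝ) ^ (-(3 : ℝ))) ^ (m : ℝ) := by
            rw [h8, Real.rpow_natCast]
        _ = (2 : ℝ) ^ (-(3 : ℝ) * (m : ℝ)) := by
            rw [← Real.rpow_mul (by norm_num)]
        _ ≤ (2 : ℝ) ^ (-(3 : ℝ) * ((τ' : ℝ) / 2)) :=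
            Real.rpow_le_rpow_of_exponent_le one_le_two (by nlinarith)
    have step2 : (2 : ℝ) ^ (τ' : ℝ) * (2 : ℝ) ^ (-(3 : ℝ) * ((τ' : ℝ) / 2))
        = (2 : ℝ) ^ (-((τ' : ℝ) / 2)) := by
      rw [← Real.rpow_add (by norm_num)]
      congr 1; ring
    have h2L : (2 : ℝ) ^ Real.logb 2 ((Ktil : ℝ) / δ) = (Ktil : ℝ) / δ :=
      Real.rpow_logb (by norm_num) (by norm_num) (by positivity)
    have step3 : (2 : ℝ) ^ (-((τ' : ℝ) / 2))
        ≤ (2 : ℝ) ^ (-(2 * Real.logb 2 ((Ktil : ℝ) / δ))) :=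
      Real.rpow_le_rpow_of_exponent_le one_le_two (by linarith)
    have step4 : (2 : ℝ) ^ (-(2 * Real.logb 2 ((Ktil : ℝ) / δ))) = (δ / Ktil) ^ 2 := by
      have e1 : (2 : ℝ) ^ (-(2 * Real.logb 2 ((Ktil : ℝ) / δ)))
          = ((2 : ℝ) ^ Real.logb 2 ((Ktil : ℝ) / δ)) ^ (-(2 : ℝ)) := by
        rw [← Real.rpow_mul (by norm_num)]
        congr 1; ring
      rw [e1, h2L, Real.rpow_neg (by positivity),
        show ((2 : ℝ)) = ((2 : ℕ) : ℝ) by norm_num, Real.rpow_natCast, ← inv_pow, inv_div]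
    have hreal : ((τ'.choose m : ℕ) : ℝ) * ((8 : ℝ)⁻¹) ^ m ≤ (δ / Ktil) ^ 2 := by
      calc ((τ'.choose m : ℕ) : ℝ) * ((8 : ℝ)⁻¹) ^ m
          ≤ (2 : ℝ) ^ (τ' : ℝ) * ((2 : ℝ) ^ (-(3 : ℝ) * ((τ' : ℝ) / 2))) := by
            apply mul_le_mul hchoose step1 (by positivity) (by positivity)
        _ = (2 : ℝ) ^ (-((τ' : ℝ) / 2)) := step2
        _ ≤ (2 : ℝ) ^ (-(2 * Real.logb 2 ((Ktil : ℝ) / δ))) := step3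
        _ = (δ / Ktil) ^ 2 := step4
    -- put everything together in `ℝ≥0∞`
    have h8e : (8 : ℝ≥0∞)⁻¹ = ENNReal.ofReal ((8 : ℝ)⁻¹) := by
      rw [ENNReal.ofReal_inv_of_pos (by norm_num)]
      norm_num
    calc μ {ω | ((τ' : ℝ) / 2) ≤
            ((Finset.univ.filter fun a : Fin τ' =>
              ∃ j ∈ S, j ≠ k ∧ h a j ω = h a k ω).card : ℝ)}
        ≤ μ (⋃ T ∈ Finset.powersetCard m (Finset.univ : Finset (Fin τ')), ⋂ a ∈ T, E a) :=
          measure_mono hev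
      _ ≤ ∑ T ∈ Finset.powersetCard m (Finset.univ : Finset (Fin τ')), μ (⋂ a ∈ T, E a) :=
          measure_biUnion_finset_le _ _
      _ ≤ ∑ T ∈ Finset.powersetCard m (Finset.univ : Finset (Fin τ')), (8 : ℝ≥0∞)⁻¹ ^ m := by
          refine Finset.sum_le_sum fun T hT => ?_
          rw [hinter T]
          calc ∏ a ∈ T, μ (E a) ≤ ∏ a ∈ T, (8 : ℝ≥0∞)⁻¹ :=
                Finset.prod_le_prod' fun a _ => Ebound k hk a
            _ = (8 : ℝ≥0∞)⁻¹ ^ T.card := Finset.prod_const _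
            _ = (8 : ℝ≥0∞)⁻¹ ^ m := by rw [(Finset.mem_powersetCard.mp hT).2]
      _ = ((τ'.choose m : ℕ) : ℝ≥0∞) * (8 : ℝ≥0∞)⁻¹ ^ m := by
          rw [Finset.sum_const, Finset.card_powersetCard, Finset.card_univ,
            Fintype.card_fin, nsmul_eq_mul]
      _ = ENNReal.ofReal (((τ'.choose m : ℕ) : ℝ) * ((8 : ℝ)⁻¹) ^ m) := by
          rw [ENNReal.ofReal_mul (by positivity), ENNReal.ofReal_natCast,
            ENNReal.ofReal_pow (by norm_num), ← h8e]
      _ ≤ ENNReal.ofReal ((δ / Ktil) ^ 2) := ENNReal.ofReal_le_ofReal hreal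
  refine ⟨key, ?_⟩
  -- union bound over `k ∈ S`
  have hsetU : {ω | ∃ k ∈ S, ((τ' : ℝ) / 2) ≤
        ((Finset.univ.filter fun a : Fin τ' =>
          ∃ j ∈ S, j ≠ k ∧ h a j ω = h a k ω).card : ℝ)}
      = ⋃ k ∈ S, {ω | ((τ' : ℝ) / 2) ≤
        ((Finset.univ.filter fun a : Fin τ' =>
          ∃ j ∈ S, j ≠ k ∧ h a j ω = h a k ω).card : ℝ)} := by
    ext ω; simp
  calc μ {ω | ∃ k ∈ S, ((τ' : ℝ) / 2) ≤
        ((Finset.univ.filter fun a : Fin τ' =>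
          ∃ j ∈ S, j ≠ k ∧ h a j ω = h a k ω).card : ℝ)}
      ≤ ∑ k ∈ S, μ {ω | ((τ' : ℝ) / 2) ≤
        ((Finset.univ.filter fun a : Fin τ' =>
          ∃ j ∈ S, j ≠ k ∧ h a j ω = h a k ω).card : ℝ)} := by
        rw [hsetU]; exact measure_biUnion_finset_le _ _
    _ ≤ ∑ _k ∈ S, ENNReal.ofReal ((δ / Ktil) ^ 2) :=
        Finset.sum_le_sum fun k hk => key k hk
    _ = (S.card : ℝ≥0∞) * ENNReal.ofReal ((δ / Ktil) ^ 2) := by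
        rw [Finset.sum_const, nsmul_eq_mul]
    _ ≤ ((Ktil : ℕ) : ℝ≥0∞) * ENNReal.ofReal ((δ / Ktil) ^ 2) :=
        mul_le_mul_left (by exact_mod_cast hS) _
    _ = ENNReal.ofReal ((Ktil : ℝ) * (δ / Ktil) ^ 2) := by
        rw [ENNReal.ofReal_mul (by positivity), ENNReal.ofReal_natCast]
    _ = ENNReal.ofReal (δ ^ 2 / Ktil) := by
        congr 1
        field_simp
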